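/- arXiv:1812.04890 — 3 statements merged into one kernel-verified Lean document; each statement's English description precedes it below -/
import Mathlib

section
/- Let A be a linear operator on a normed space with ‖A^n‖ ≤ 1 for all n ∈ ℕ, and consider the 3×3 block operator matrix B₂ = [[0,I,0],[0,0,I],[0,0,A]]. Then for all n ≥ 2, B₂^n = [[0,0,A^{n-2}],[0,0,A^{n-1}],[0,0,A^n]], and consequently ‖B₂^n‖ ≤ √3 for all n ≥ 2 (in the ℓ²-product norm). -/
/-- For `A` with `‖Aᵏ‖ ≤ 1` for all `k`, the block operator
`B₂ = [[0,I,0],[0,0,I],[0,0,A]]` on `X³` (with the `ℓ²` product norm) satisfies, for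
`n ≥ 2`, `B₂ⁿ = [[0,0,A^{n-2}],[0,0,A^{n-1}],[0,0,Aⁿ]]` and `‖B₂ⁿ‖ ≤ √3`. -/
theorem block_B2_powers_bounded
    (X : Type*) [NormedAddCommGroup X] [NormedSpace ℂ X]
    (A : X →L[ℂ] X) (hA : ∀ k : ℕ, ‖A ^ k‖ ≤ 1)
    (B₂ : PiLp 2 (fun _ : Fin 3 => X) →L[ℂ] PiLp 2 (fun _ : Fin 3 => X))
    (hB₂ : ∀ v : PiLp 2 (fun _ : Fin 3 => X),
      WithLp.equiv 2 (∀ _ : Fin 3, X) (B₂ v)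
        = ![WithLp.equiv 2 (∀ _ : Fin 3, X) v 1,
            WithLp.equiv 2 (∀ _ : Fin 3, X) v 2,
            A (WithLp.equiv 2 (∀ _ : Fin 3, X) v 2)]) :
    ∀ n : ℕ, 2 ≤ n →
      (∀ v : PiLp 2 (fun _ : Fin 3 => X),
        WithLp.equiv 2 (∀ _ : Fin 3, X) ((B₂ ^ n) v)
          = ![(A ^ (n - 2)) (WithLp.equiv 2 (∀ _ : Fin 3, X) v 2),
              (A ^ (n - 1)) (WithLp.equiv 2 (∀ _ : Fin 3, X) v 2),
              (A ^ n) (WithLp.equiv 2 (∀ _ : Fin 3, X) v 2)])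
      ∧ ‖B₂ ^ n‖ ≤ Real.sqrt 3 := by
  have hop : ∀ (k : ℕ) (x : X), ‖(A ^ k) x‖ ≤ ‖x‖ := by
    intro k x
    refine ((A ^ k).le_opNorm x).trans ?_
    have := mul_le_of_le_one_left (norm_nonneg x) (hA k)
    simpa using this
  have key : ∀ n : ℕ, 2 ≤ n →
      ∀ v : PiLp 2 (fun _ : Fin 3 => X),
        WithLp.equiv 2 (∀ _ : Fin 3, X) ((B₂ ^ n) v)
          = ![(A ^ (n - 2)) (WithLp.equiv 2 (∀ _ : Fin 3, X) v 2),
              (A ^ (n - 1)) (WithLp.equiv 2 (∀ _ : Fin 3, X) v 2),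
              (A ^ n) (WithLp.equiv 2 (∀ _ : Fin 3, X) v 2)] := by
    intro n hn
    induction n, hn using Nat.le_induction with
    | base =>
      intro v
      have h2 : (B₂ ^ 2) v = B₂ (B₂ v) := by
        rw [pow_succ, pow_one]; rfl
      rw [h2, hB₂ (B₂ v)]
      funext i
      have c1 := congrFun (hB₂ v) 1
      have c2 := congrFun (hB₂ v) 2
      simp only [Matrix.cons_val_one, Matrix.head_cons] at c1 c2
      fin_cases i <;> simp [pow_succ, c1, c2]
    | succ m hm ih =>
      intro v
      have h2 : (B₂ ^ (m + 1)) v = (B₂ ^ m) (B₂ v) := by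
        rw [pow_succ]; rfl
      rw [h2, ih (B₂ v)]
      have hv2 : WithLp.equiv 2 (∀ _ : Fin 3, X) (B₂ v) 2
          = A (WithLp.equiv 2 (∀ _ : Fin 3, X) v 2) := by
        rw [hB₂ v]; simp
      rw [hv2]
      funext i
      fin_cases i
      · show (A ^ (m - 2)) (A _) = (A ^ (m + 1 - 2)) _
        have : m + 1 - 2 = m - 2 + 1 := by omega
        rw [this, pow_succ]; rfl
      · show (A ^ (m - 1)) (A _) = (A ^ (m + 1 - 1)) _
        have : m + 1 - 1 = m - 1 + 1 := by omega
        rw [this, pow_succ]; rfl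
      · show (A ^ m) (A _) = (A ^ (m + 1)) _
        rw [pow_succ]; rfl
  intro n hn
  refine ⟨key n hn, ?_⟩
  refine ContinuousLinearMap.opNorm_le_bound _ (Real.sqrt_nonneg 3) ?_
  intro v
  have hv2 : ‖WithLp.equiv 2 (∀ _ : Fin 3, X) v 2‖ ≤ ‖v‖ := by
    rw [PiLp.norm_eq_of_L2]
    have h1 : ‖WithLp.equiv 2 (∀ _ : Fin 3, X) v 2‖ ^ 2 ≤ ∑ i, ‖v i‖ ^ 2 := by
      have : (WithLp.equiv 2 (∀ _ : Fin 3, X) v 2 : X) = v 2 := rfl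
      rw [this, Fin.sum_univ_three]
      have h0 : (0:ℝ) ≤ ‖v 0‖ ^ 2 := sq_nonneg _
      have h1' : (0:ℝ) ≤ ‖v 1‖ ^ 2 := sq_nonneg _
      linarith
    calc ‖WithLp.equiv 2 (∀ _ : Fin 3, X) v 2‖
        = Real.sqrt (‖WithLp.equiv 2 (∀ _ : Fin 3, X) v 2‖ ^ 2) :=
          (Real.sqrt_sq (norm_nonneg _)).symm
      _ ≤ Real.sqrt (∑ i, ‖v i‖ ^ 2) := Real.sqrt_le_sqrt h1
  set x := WithLp.equiv 2 (∀ _ : Fin 3, X) v 2 with hx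
  have hnorm : ‖(B₂ ^ n) v‖
      = Real.sqrt (‖(A ^ (n-2)) x‖ ^ 2 + ‖(A ^ (n-1)) x‖ ^ 2 + ‖(A ^ n) x‖ ^ 2) := by
    rw [PiLp.norm_eq_of_L2, Fin.sum_univ_three]
    have hk := key n hn v
    have h0 : ((B₂ ^ n) v) 0 = (A ^ (n-2)) x := by
      have := congrFun hk 0; simpa [hx] using this
    have h1 : ((B₂ ^ n) v) 1 = (A ^ (n-1)) x := by
      have := congrFun hk 1; simpa [hx] using this
    have h2 : ((B₂ ^ n) v) 2 = (A ^ n) x := by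
      have := congrFun hk 2; simpa [hx] using this
    rw [h0, h1, h2]
  rw [hnorm]
  have hbound : ‖(A ^ (n-2)) x‖ ^ 2 + ‖(A ^ (n-1)) x‖ ^ 2 + ‖(A ^ n) x‖ ^ 2
      ≤ 3 * ‖v‖ ^ 2 := by
    have b0 : ‖(A ^ (n-2)) x‖ ≤ ‖v‖ := (hop _ _).trans hv2
    have b1 : ‖(A ^ (n-1)) x‖ ≤ ‖v‖ := (hop _ _).trans hv2
    have b2 : ‖(A ^ n) x‖ ≤ ‖v‖ := (hop _ _).trans hv2
    have s0 := pow_le_pow_left₀ (norm_nonneg _) b0 2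
    have s1 := pow_le_pow_left₀ (norm_nonneg _) b1 2
    have s2 := pow_le_pow_left₀ (norm_nonneg _) b2 2
    linarith
  calc Real.sqrt (‖(A ^ (n-2)) x‖ ^ 2 + ‖(A ^ (n-1)) x‖ ^ 2 + ‖(A ^ n) x‖ ^ 2)
      ≤ Real.sqrt (3 * ‖v‖ ^ 2) := Real.sqrt_le_sqrt hbound
    _ = Real.sqrt 3 * ‖v‖ := by
        rw [Real.sqrt_mul (by norm_num), Real.sqrt_sq (norm_nonneg _)]
end

section
/- Suppose a complex-valued e ∈ H^{s+2}(ℝ^d) satisfies e = (i δt/4)Δe − (i δt β/2) Υ e − r for real-valued Υ ∈ L^∞ and r ∈ L²(ℝ^d). Then ‖e‖_{L²} ≤ ‖r‖_{L²}. -/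
open MeasureTheory Complex


lemma insertNth_eq_add_smul {n : ℕ} (j : Fin (n+1)) (t : ℝ) (y : Fin n → ℝ) :
    (j.insertNth t y : Fin (n+1) → ℝ) = (Fin.insertNth (α := fun _ => ℝ) j 0 y) + t • (Pi.single j 1 : Fin (n+1) → ℝ) := by
  funext k
  refine Fin.succAboveCases j ?_ ?_ k
  · simp
  · intro m
    simp [Fin.insertNth_apply_succAbove, Pi.single_eq_of_ne (Fin.succAbove_ne j m)]

lemma integral_pderiv_eq_zero {d : ℕ} (j : Fin d) (g : (Fin d → ℝ) → ℝ)
    (hg : Differentiable ℝ g)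
    (hgi : Integrable g)
    (hgi' : Integrable (fun x => fderiv ℝ g x (Pi.single j 1))) :
    ∫ x, fderiv ℝ g x (Pi.single j 1) = 0 := by
  obtain ⟨n, rfl⟩ : ∃ n, d = n + 1 := ⟨d - 1, (Nat.succ_pred_eq_of_pos j.pos).symm⟩
  set v : Fin (n+1) → ℝ := Pi.single j 1 with hv
  have mp : MeasurePreserving (MeasurableEquiv.piFinSuccAbove (fun _ : Fin (n+1) => ℝ) j).symm
      ((volume : Measure ℝ).prod (volume : Measure (Fin n → ℝ))) volume :=
    (volume_preserving_piFinSuccAbove (fun _ : Fin (n + 1) => ℝ) j).symm _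
  have hins : ∀ p : ℝ × (Fin n → ℝ),
      (MeasurableEquiv.piFinSuccAbove (fun _ : Fin (n+1) => ℝ) j).symm p
        = j.insertNth p.1 p.2 := by
    intro p
    rw [MeasurableEquiv.piFinSuccAbove_symm_apply]
    rfl
  have h1 : ∫ x, fderiv ℝ g x v =
      ∫ p : ℝ × (Fin n → ℝ), fderiv ℝ g (j.insertNth p.1 p.2) v
        ∂((volume : Measure ℝ).prod (volume : Measure (Fin n → ℝ))) := by
    rw [← mp.integral_comp (MeasurableEquiv.measurableEmbedding _)]
    refine integral_congr_ae (Filter.Eventually.of_forall fun p => ?_)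
    exact congrArg (fun z => fderiv ℝ g z v) (hins p)
  have hI' : Integrable (fun p : ℝ × (Fin n → ℝ) => fderiv ℝ g (j.insertNth p.1 p.2) v)
      ((volume : Measure ℝ).prod (volume : Measure (Fin n → ℝ))) := by
    have := mp.integrable_comp_emb (MeasurableEquiv.measurableEmbedding _) |>.mpr hgi'
    refine this.congr (Filter.Eventually.of_forall fun p => ?_)
    simp only [Function.comp]
    exact congrArg (fun z => fderiv ℝ g z v) (hins p)
  have hI : Integrable (fun p : ℝ × (Fin n → ℝ) => g (j.insertNth p.1 p.2))
      ((volume : Measure ℝ).prod (volume : Measure (Fin n → ℝ))) := by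
    have := mp.integrable_comp_emb (MeasurableEquiv.measurableEmbedding _) |>.mpr hgi
    refine this.congr (Filter.Eventually.of_forall fun p => ?_)
    simp only [Function.comp]
    exact congrArg g (hins p)
  rw [h1, integral_prod_symm _ hI']
  have hae1 : ∀ᵐ y : Fin n → ℝ, Integrable (fun t => fderiv ℝ g (j.insertNth t y) v) :=
    hI'.prod_left_ae
  have hae2 : ∀ᵐ y : Fin n → ℝ, Integrable (fun t => g (j.insertNth t y)) :=
    hI.prod_left_ae
  rw [show (0:ℝ) = ∫ y : Fin n → ℝ, (0:ℝ) by simp]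
  apply integral_congr_ae
  filter_upwards [hae1, hae2] with y h1y h2y
  have hderiv : ∀ t : ℝ, HasDerivAt (fun t => g (j.insertNth t y))
      (fderiv ℝ g (j.insertNth t y) v) t := by
    intro t
    have hc : HasDerivAt (fun t : ℝ => (j.insertNth t y : Fin (n+1) → ℝ)) v t := by
      have hfe : (fun t : ℝ => (j.insertNth t y : Fin (n+1) → ℝ))
          = fun t => (Fin.insertNth (α := fun _ => ℝ) j 0 y) + t • v :=
        funext fun t => insertNth_eq_add_smul j t y
      rw [hfe]
      simpa using ((hasDerivAt_id t).smul_const v).const_add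
        (Fin.insertNth (α := fun _ => ℝ) j 0 y)
    exact (hg _).hasFDerivAt.comp_hasDerivAt t hc
  exact integral_eq_zero_of_hasDerivAt_of_integrable hderiv h1y h2y

open scoped ComplexConjugate





/-- The Laplacian of a function on `ℝ^d`. -/
noncomputable def lap (d : ℕ) (u : (Fin d → ℝ) → ℂ) (x : Fin d → ℝ) : ℂ :=
  ∑ j : Fin d, fderiv ℝ (fun y => fderiv ℝ u y (Pi.single j 1)) x (Pi.single j 1)

/-- If `e ∈ H^{s+2}(ℝ^d)` satisfies `e = (iδt/4)Δe − (iδtβ/2)Υe − r` with `Υ`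
real-valued bounded and `r ∈ L²`, then `‖e‖_{L²} ≤ ‖r‖_{L²}`. -/
theorem L2_bound_from_resolvent_identity
    (d : ℕ) (δt β : ℝ) (hδt : 0 < δt)
    (e r : (Fin d → ℝ) → ℂ) (Υ : (Fin d → ℝ) → ℝ)
    (he_smooth : ContDiff ℝ 2 e)
    (he2 : MemLp e 2 volume)
    (he2' : MemLp (fun x => fderiv ℝ e x) 2 volume)
    (he2'' : MemLp (fun x => iteratedFDeriv ℝ 2 e x) 2 volume)
    (hΥmeas : Measurable Υ) (hΥbdd : ∃ M, ∀ x, |Υ x| ≤ M)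
    (hr : MemLp r 2 volume)
    (heq : ∀ x, e x = (Complex.I * δt / 4) * lap d e x
        - (Complex.I * δt * β / 2) * (Υ x : ℂ) * e x - r x) :
    eLpNorm e 2 volume ≤ eLpNorm r 2 volume := by
  classical
  set v : Fin d → Fin d → ℝ := fun j => Pi.single j 1 with hvdef
  set de : Fin d → (Fin d → ℝ) → ℂ := fun j x => fderiv ℝ e x (v j) with hdedef
  set D2 : Fin d → (Fin d → ℝ) → ℂ :=
    fun j x => fderiv ℝ (fun y => fderiv ℝ e y (v j)) x (v j) with hD2def
  -- basic smoothness facts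
  have hfd1 : ContDiff ℝ 1 (fderiv ℝ e) := he_smooth.fderiv_right (by norm_num)
  have hde1 : ∀ j, ContDiff ℝ 1 (de j) := by
    intro j
    exact (ContinuousLinearMap.apply ℝ ℂ (v j)).contDiff.comp hfd1
  have hdediff : ∀ j x, DifferentiableAt ℝ (de j) x :=
    fun j x => ((hde1 j).differentiable one_ne_zero) x
  -- D2 in terms of iterated derivative
  have hD2eq : ∀ j x, D2 j x = iteratedFDeriv ℝ 2 e x ![v j, v j] := by
    intro j x
    rw [iteratedFDeriv_two_apply]
    have hdiff : DifferentiableAt ℝ (fderiv ℝ e) x := (hfd1.differentiable one_ne_zero) x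
    simp only [hD2def]
    rw [fderiv_clm_apply hdiff (differentiableAt_const _)]
    simp [Matrix.cons_val_zero, Matrix.cons_val_one]
  -- MemLp of de j and D2 j
  have hnormv : ∀ j, ‖v j‖ = 1 := by
    intro j
    simpa using Pi.norm_single (G := fun _ : Fin d => ℝ) (i := j) (1:ℝ)
  have hde2 : ∀ j, MemLp (de j) 2 volume := by
    intro j
    exact (ContinuousLinearMap.apply ℝ ℂ (v j)).comp_memLp' he2'
  have hD2cont : ∀ j, Continuous (D2 j) := by
    intro j
    have h := ((hde1 j).continuous_fderiv one_ne_zero)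
    exact (ContinuousLinearMap.apply ℝ ℂ (v j)).continuous.comp h
  have hD2mem : ∀ j, MemLp (D2 j) 2 volume := by
    intro j
    refine MemLp.of_le he2'' ((hD2cont j).aestronglyMeasurable) ?_
    refine Filter.Eventually.of_forall fun x => ?_
    rw [hD2eq j x]
    calc ‖iteratedFDeriv ℝ 2 e x ![v j, v j]‖
        ≤ ‖iteratedFDeriv ℝ 2 e x‖ * ∏ i : Fin 2, ‖(![v j, v j]) i‖ :=
          (iteratedFDeriv ℝ 2 e x).le_opNorm _
      _ ≤ ‖iteratedFDeriv ℝ 2 e x‖ := by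
          simp [Fin.prod_univ_two, hnormv j]
  -- integrability of products
  have hmul : ∀ (f g : (Fin d → ℝ) → ℂ), MemLp f 2 volume → MemLp g 2 volume →
      Integrable (fun x => f x * g x) volume := by
    intro f g hf hg
    have : MemLp (f • g) 1 volume :=
      MemLp.smul (p := 2) (q := 2) (r := 1) hg hf
    exact memLp_one_iff_integrable.mp this
  have hconjmem : MemLp (fun x => conj (e x)) 2 volume := by
    have := Complex.conjCLE.toContinuousLinearMap.comp_memLp' he2
    exact this
  -- the functions g j and their derivatives
  set gj : Fin d → (Fin d → ℝ) → ℝ := fun j x => (conj (e x) * de j x).im with hgjdef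
  have hkeyD : ∀ j x, HasFDerivAt (gj j)
      (Complex.imCLM.comp
        ((conj (e x) • fderiv ℝ (de j) x) +
          (Complex.conjCLE.toContinuousLinearMap.comp (fderiv ℝ e x)).smulRight (de j x))) x := by
    intro j x
    have hdx : DifferentiableAt ℝ e x := (he_smooth.differentiable (by norm_num)) x
    have hce : HasFDerivAt (fun y => conj (e y))
        (Complex.conjCLE.toContinuousLinearMap.comp (fderiv ℝ e x)) x :=
      (Complex.conjCLE.toContinuousLinearMap.hasFDerivAt).comp x hdx.hasFDerivAt
    have hde' : HasFDerivAt (de j) (fderiv ℝ (de j) x) x := (hdediff j x).hasFDerivAt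
    have hmulD := hce.mul' hde'
    exact (Complex.imCLM.hasFDerivAt).comp x hmulD
  have hgjdiff : ∀ j, Differentiable ℝ (gj j) := fun j x => (hkeyD j x).differentiableAt
  have hgjderiv : ∀ j x, fderiv ℝ (gj j) x (v j) = (conj (e x) * D2 j x).im := by
    intro j x
    rw [(hkeyD j x).fderiv]
    have h1 : fderiv ℝ (de j) x (v j) = D2 j x := rfl
    simp only [ContinuousLinearMap.comp_apply, ContinuousLinearMap.add_apply,
      ContinuousLinearMap.smul_apply, ContinuousLinearMap.smulRight_apply,
      ContinuousLinearEquiv.coe_coe, h1]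
    have h2 : fderiv ℝ e x (v j) = de j x := rfl
    rw [h2]
    simp only [Complex.imCLM_apply, smul_eq_mul, Complex.add_im, Complex.mul_im,
      Complex.conj_re, Complex.conj_im, Complex.conjCLE_apply]
    ring
  -- integrability facts
  have hint_gj : ∀ j, Integrable (gj j) volume := by
    intro j
    exact (hmul _ _ hconjmem (hde2 j)).im
  have hint_D2 : ∀ j, Integrable (fun x => (conj (e x) * D2 j x).im) volume := by
    intro j
    exact (hmul _ _ hconjmem (hD2mem j)).im
  -- each term integrates to zero
  have hzero : ∀ j, ∫ x, (conj (e x) * D2 j x).im = 0 := by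
    intro j
    have hint' : Integrable (fun x => fderiv ℝ (gj j) x (Pi.single j 1)) volume := by
      refine (hint_D2 j).congr (Filter.Eventually.of_forall fun x => ?_)
      exact (hgjderiv j x).symm
    have h0 := integral_pderiv_eq_zero j (gj j) (hgjdiff j) (hint_gj j) hint'
    rw [← h0]
    exact integral_congr_ae (Filter.Eventually.of_forall fun x => (hgjderiv j x).symm)
  -- the imaginary part of ∫ conj e * lap e vanishes
  have hSsum : ∀ x, (conj (e x) * (∑ j : Fin d, D2 j x)).im
      = ∑ j : Fin d, (conj (e x) * D2 j x).im := by
    intro x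
    rw [Finset.mul_sum]
    exact map_sum Complex.imCLM _ _
  have hSint : Integrable (fun x => (conj (e x) * (∑ j : Fin d, D2 j x)).im) volume := by
    refine (integrable_finset_sum Finset.univ (fun j _ => hint_D2 j)).congr
      (Filter.Eventually.of_forall fun x => ?_)
    exact (hSsum x).symm
  have hIm0 : ∫ x, (conj (e x) * (∑ j : Fin d, D2 j x)).im = 0 := by
    rw [integral_congr_ae (Filter.Eventually.of_forall fun x => hSsum x)]
    rw [integral_finset_sum Finset.univ (fun j _ => hint_D2 j)]
    exact Finset.sum_eq_zero fun j _ => hzero j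
  -- pointwise real-part identity
  have hptP : ∀ x, (conj (e x) * e x).re
      = -(δt/4) * (conj (e x) * (∑ j : Fin d, D2 j x)).im - (conj (e x) * r x).re := by
    intro x
    have hlap : lap d e x = ∑ j : Fin d, D2 j x := rfl
    have h := heq x
    rw [hlap] at h
    have hc1 : Complex.I * (δt:ℂ) / 4 = ((δt/4 : ℝ) : ℂ) * Complex.I := by push_cast; ring
    have hc2 : Complex.I * (δt:ℂ) * (β:ℂ) / 2 * ((Υ x : ℝ):ℂ)
        = ((δt*β/2*Υ x : ℝ) : ℂ) * Complex.I := by push_cast; ring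
    have hP : conj (e x) * e x
        = (((δt/4 : ℝ) : ℂ) * Complex.I) * (conj (e x) * (∑ j : Fin d, D2 j x))
          - (((δt*β/2*Υ x : ℝ) : ℂ) * Complex.I) * (conj (e x) * e x)
          - conj (e x) * r x := by
      nth_rewrite 2 [h]
      rw [← hc1, ← hc2]
      ring
    have hre := congrArg Complex.re hP
    simp only [Complex.mul_re, Complex.mul_im, Complex.sub_re, Complex.sub_im,
      Complex.add_re, Complex.add_im, Complex.I_re, Complex.I_im,
      Complex.ofReal_re, Complex.ofReal_im, Complex.conj_re, Complex.conj_im] at hre ⊢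
    linear_combination hre
  -- integrate the identity
  have hmuler : Integrable (fun x => conj (e x) * r x) volume := hmul _ _ hconjmem hr
  have hmulee : Integrable (fun x => conj (e x) * e x) volume := hmul _ _ hconjmem he2
  have hkey : ∫ x, (conj (e x) * e x).re = - ∫ x, (conj (e x) * r x).re := by
    have h1 : ∫ x, (conj (e x) * e x).re
        = ∫ x, (-(δt/4) * (conj (e x) * (∑ j : Fin d, D2 j x)).im - (conj (e x) * r x).re) :=
      integral_congr_ae (Filter.Eventually.of_forall fun x => hptP x)
    have hmuler_re : Integrable (fun x => (conj (e x) * r x).re) volume := by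
      simpa [RCLike.re_to_complex] using hmuler.re
    rw [h1, integral_sub (hSint.const_mul _) hmuler_re, integral_const_mul, hIm0]
    ring
  -- L² endgame
  set fL := he2.toLp e with hfL
  set gL := hr.toLp r with hgL
  have hinner_fg : (inner ℂ fL gL : ℂ) = ∫ x, conj (e x) * r x := by
    rw [L2.inner_def]
    refine integral_congr_ae ?_
    filter_upwards [he2.coeFn_toLp, hr.coeFn_toLp] with x hx hy
    rw [hx, hy, RCLike.inner_apply']
  have hinner_ff : (inner ℂ fL fL : ℂ) = ∫ x, conj (e x) * e x := by
    rw [L2.inner_def]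
    refine integral_congr_ae ?_
    filter_upwards [he2.coeFn_toLp] with x hx
    rw [hx, RCLike.inner_apply']
  have hnormsq : ‖fL‖^2 = ∫ x, (conj (e x) * e x).re := by
    rw [← inner_self_eq_norm_sq (𝕜 := ℂ) fL, hinner_ff, ← integral_re hmulee]
    rfl
  have hnre : RCLike.re (inner ℂ fL gL : ℂ) = ∫ x, (conj (e x) * r x).re := by
    rw [hinner_fg, ← integral_re hmuler]
    rfl
  have hfinal : ‖fL‖ ≤ ‖gL‖ := by
    have h1 : ‖fL‖^2 ≤ ‖fL‖ * ‖gL‖ := by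
      have h2 : ‖fL‖^2 = - RCLike.re (inner ℂ fL gL : ℂ) := by
        rw [hnormsq, hkey, hnre]
      have h3 : - RCLike.re (inner ℂ fL gL : ℂ) ≤ ‖(inner ℂ fL gL : ℂ)‖ :=
        (neg_le_abs _).trans (RCLike.abs_re_le_norm _)
      calc ‖fL‖^2 = - RCLike.re (inner ℂ fL gL : ℂ) := h2
        _ ≤ ‖(inner ℂ fL gL : ℂ)‖ := h3
        _ ≤ ‖fL‖ * ‖gL‖ := norm_inner_le_norm fL gL
    nlinarith [norm_nonneg fL, norm_nonneg gL]
  rw [Lp.norm_toLp, Lp.norm_toLp] at hfinal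
  exact (ENNReal.toReal_le_toReal he2.eLpNorm_ne_top hr.eLpNorm_ne_top).mp hfinal
end

section
/- Energy preservation of the generalized relaxation method (simplified NLS case): suppose φ_n, φ_{n+1} ∈ H¹(ℝ^d) ∩ L^{2σ+2}, and γ_{n±1/2} ≥ 0 satisfy (γ_{n+1/2}^{σ+1} − γ_{n-1/2}^{σ+1}) = ((σ+1)/σ)|φ_n|²(γ_{n+1/2}^σ − γ_{n-1/2}^σ) pointwise, and i(φ_{n+1}−φ_n)/δt = (−Δ/2 + β γ_{n+1/2}^σ)(φ_{n+1}+φ_n)/2. Then E_rlx(φ_{n+1}, γ_{n+1/2}) = E_rlx(φ_n, γ_{n-1/2}), where E_rlx(φ,γ) = ∫ ( (1/4)|∇φ|² + (β/2)γ^σ|φ|² − β σ/(2(σ+1)) γ^{σ+1} ) dx. -/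
open MeasureTheory

/-- Squared norm of the gradient, `|∇u|²`. -/
noncomputable def gradsq (d : ℕ) (u : (Fin d → ℝ) → ℂ) (x : Fin d → ℝ) : ℝ :=
  ∑ j : Fin d, ‖fderiv ℝ u x (Pi.single j 1)‖ ^ 2

/-- Pairing `∇u ⋅ conj(∇v)`. -/
noncomputable def gradInner (d : ℕ) (u v : (Fin d → ℝ) → ℂ) (x : Fin d → ℝ) : ℂ :=
  ∑ j : Fin d, fderiv ℝ u x (Pi.single j 1) * (starRingEnd ℂ) (fderiv ℝ v x (Pi.single j 1))

lemma re_half_aux (a b : ℂ) :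
    (((a + b) / 2) * (starRingEnd ℂ) (a - b)).re = (‖a‖ ^ 2 - ‖b‖ ^ 2) / 2 := by
  simp [Complex.mul_re, Complex.div_re, Complex.sq_norm,
    Complex.normSq_apply]
  ring

lemma scheme_re_aux (a b L : ℂ) (t g : ℝ) (ht : t ≠ 0)
    (h : Complex.I * ((a - b) / (t : ℂ)) = -(1 / 2 : ℂ) * L + (g : ℂ) * ((a + b) / 2)) :
    (L * (starRingEnd ℂ) (a - b)).re = g * (‖a‖ ^ 2 - ‖b‖ ^ 2) := by
  have hL : L = 2 * ((g : ℂ) * ((a + b) / 2)) - 2 * (Complex.I * ((a - b) / (t : ℂ))) := by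
    linear_combination 2 * h
  rw [hL]
  have htC : (t : ℂ) ≠ 0 := by exact_mod_cast ht
  field_simp
  simp [Complex.mul_re, Complex.sub_re, Complex.div_re,
    Complex.sq_norm, Complex.normSq_apply]
  have ht2 : t ^ 2 * t⁻¹ ^ 2 = 1 := by field_simp
  linear_combination (g * a.re ^ 2 - g * b.re ^ 2 + g * a.im ^ 2 - g * b.im ^ 2) * ht2

/-- Energy preservation of the generalized relaxation method for NLS with power
nonlinearity `|φ|^{2σ}`: under the relaxation constraint and the scheme equation,
`E_rlx(φ_{n+1}, γ_{n+1/2}) = E_rlx(φ_n, γ_{n-1/2})` where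
`E_rlx(φ,γ) = ∫ ((1/4)|∇φ|² + (β/2)γ^σ|φ|² − βσ/(2(σ+1)) γ^{σ+1})`. -/
theorem generalized_relaxation_energy_preservation
    (d σ : ℕ) (hd : 1 ≤ d) (hσ : 1 ≤ σ) (β δt : ℝ) (hδt : 0 < δt)
    (φn φp : (Fin d → ℝ) → ℂ) (γm γp : (Fin d → ℝ) → ℝ)
    (hγm : ∀ x, 0 ≤ γm x) (hγp : ∀ x, 0 ≤ γp x)
    (hφn : ContDiff ℝ 2 φn) (hφp : ContDiff ℝ 2 φp)
    (hconstraint : ∀ x, γp x ^ (σ + 1) - γm x ^ (σ + 1)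
      = ((σ + 1 : ℝ) / σ) * ‖φn x‖ ^ 2 * (γp x ^ σ - γm x ^ σ))
    (hscheme : ∀ x, Complex.I * ((φp x - φn x) / (δt : ℂ))
      = -(1 / 2 : ℂ) * lap d (fun y => (φp y + φn y) / 2) x
        + (β : ℂ) * ((γp x ^ σ : ℝ) : ℂ) * ((φp x + φn x) / 2))
    (hIBP : (∫ x, lap d (fun y => (φp y + φn y) / 2) x * (starRingEnd ℂ) (φp x - φn x))
      = -(∫ x, gradInner d (fun y => (φp y + φn y) / 2) (fun y => φp y - φn y) x))
    (hInt1 : Integrable (fun x => gradsq d φp x))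
    (hInt2 : Integrable (fun x => gradsq d φn x))
    (hInt3 : Integrable (fun x => γp x ^ σ * ‖φp x‖ ^ 2))
    (hInt4 : Integrable (fun x => γm x ^ σ * ‖φn x‖ ^ 2))
    (hInt5 : Integrable (fun x => γp x ^ (σ + 1)))
    (hInt6 : Integrable (fun x => γm x ^ (σ + 1)))
    (hInt7 : Integrable (fun x =>
      lap d (fun y => (φp y + φn y) / 2) x * (starRingEnd ℂ) (φp x - φn x)))
    (hInt8 : Integrable (fun x =>
      gradInner d (fun y => (φp y + φn y) / 2) (fun y => φp y - φn y) x)) :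
    (∫ x, ((1 / 4) * gradsq d φp x + (β / 2) * γp x ^ σ * ‖φp x‖ ^ 2
        - β * σ / (2 * (σ + 1)) * γp x ^ (σ + 1)))
      = ∫ x, ((1 / 4) * gradsq d φn x + (β / 2) * γm x ^ σ * ‖φn x‖ ^ 2
        - β * σ / (2 * (σ + 1)) * γm x ^ (σ + 1)) := by
  have hσ0 : (σ : ℝ) ≠ 0 := by positivity
  have hσ1 : (σ : ℝ) + 1 ≠ 0 := by positivity
  -- pointwise real part of the scheme multiplied by conj(φp - φn)
  have hlapre : ∀ x, (lap d (fun y => (φp y + φn y) / 2) x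
      * (starRingEnd ℂ) (φp x - φn x)).re
      = β * γp x ^ σ * (‖φp x‖ ^ 2 - ‖φn x‖ ^ 2) := by
    intro x
    refine scheme_re_aux (φp x) (φn x) _ δt (β * γp x ^ σ) (ne_of_gt hδt) ?_
    have h := hscheme x
    push_cast
    push_cast at h
    linear_combination h
  -- pointwise real part of gradInner
  have hdp : Differentiable ℝ φp := hφp.differentiable (by norm_num)
  have hdn : Differentiable ℝ φn := hφn.differentiable (by norm_num)
  have hgradre : ∀ x, (gradInner d (fun y => (φp y + φn y) / 2)
      (fun y => φp y - φn y) x).re = (gradsq d φp x - gradsq d φn x) / 2 := by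
    intro x
    unfold gradInner gradsq
    rw [Complex.re_sum]
    have hterm : ∀ j : Fin d, ((fderiv ℝ (fun y => (φp y + φn y) / 2) x (Pi.single j 1))
        * (starRingEnd ℂ) (fderiv ℝ (fun y => φp y - φn y) x (Pi.single j 1))).re
        = (‖fderiv ℝ φp x (Pi.single j 1)‖ ^ 2 - ‖fderiv ℝ φn x (Pi.single j 1)‖ ^ 2) / 2 := by
      intro j
      have hψ : fderiv ℝ (fun y => (φp y + φn y) / 2) x (Pi.single j 1)
          = (fderiv ℝ φp x (Pi.single j 1) + fderiv ℝ φn x (Pi.single j 1)) / 2 := by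
        have h : HasFDerivAt (fun y => (φp y + φn y) / 2)
            ((2 : ℂ)⁻¹ • (fderiv ℝ φp x + fderiv ℝ φn x)) x := by
          have := ((hdp x).hasFDerivAt.add (hdn x).hasFDerivAt).const_smul ((2 : ℂ)⁻¹)
          refine this.congr_of_eventuallyEq (Filter.Eventually.of_forall fun y => ?_)
          simp [smul_eq_mul, div_eq_inv_mul]
        rw [h.fderiv]
        simp [smul_eq_mul, div_eq_inv_mul]
        ring
      have hδ : fderiv ℝ (fun y => φp y - φn y) x (Pi.single j 1)
          = fderiv ℝ φp x (Pi.single j 1) - fderiv ℝ φn x (Pi.single j 1) := by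
        rw [fderiv_fun_sub (hdp x) (hdn x)]; simp
      rw [hψ, hδ, re_half_aux]
    calc (∑ j : Fin d, ((fderiv ℝ (fun y => (φp y + φn y) / 2) x (Pi.single j 1))
          * (starRingEnd ℂ) (fderiv ℝ (fun y => φp y - φn y) x (Pi.single j 1))).re)
        = ∑ j : Fin d, (‖fderiv ℝ φp x (Pi.single j 1)‖ ^ 2
            - ‖fderiv ℝ φn x (Pi.single j 1)‖ ^ 2) / 2 :=
          Finset.sum_congr rfl fun j _ => hterm j
      _ = (∑ j : Fin d, ‖fderiv ℝ φp x (Pi.single j 1)‖ ^ 2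
            - ∑ j : Fin d, ‖fderiv ℝ φn x (Pi.single j 1)‖ ^ 2) / 2 := by
          rw [← Finset.sum_div, Finset.sum_sub_distrib]
  -- integrability of γp^σ ‖φn‖²
  have hBfun : (fun x => γp x ^ σ * ‖φn x‖ ^ 2)
      = fun x => γm x ^ σ * ‖φn x‖ ^ 2
        + ((σ : ℝ) / (σ + 1)) * (γp x ^ (σ + 1) - γm x ^ (σ + 1)) := by
    funext x
    have hc := hconstraint x
    rw [hc]
    field_simp
    ring
  have hIntD : Integrable (fun x =>
      ((σ : ℝ) / (σ + 1)) * (γp x ^ (σ + 1) - γm x ^ (σ + 1))) :=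
    (hInt5.sub hInt6).const_mul _
  have hIntB : Integrable (fun x => γp x ^ σ * ‖φn x‖ ^ 2) := by
    rw [hBfun]
    exact hInt4.add hIntD
  -- notation for the integrals
  set R1 := ∫ x, gradsq d φp x with hR1
  set R2 := ∫ x, gradsq d φn x with hR2
  set A := ∫ x, γp x ^ σ * ‖φp x‖ ^ 2 with hA
  set B := ∫ x, γp x ^ σ * ‖φn x‖ ^ 2 with hB
  set C := ∫ x, γm x ^ σ * ‖φn x‖ ^ 2 with hC
  set Dp := ∫ x, γp x ^ (σ + 1) with hDp
  set Dm := ∫ x, γm x ^ (σ + 1) with hDm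
  -- constraint on the integral level
  have hBeq : B = C + ((σ : ℝ) / (σ + 1)) * (Dp - Dm) := by
    rw [hB, hBfun, integral_add hInt4 hIntD,
      integral_const_mul, integral_sub hInt5 hInt6]
  -- the key energy identity from the scheme
  have key : β * (A - B) = -(R1 - R2) / 2 := by
    have e1 : ∫ x, (lap d (fun y => (φp y + φn y) / 2) x
        * (starRingEnd ℂ) (φp x - φn x)).re
        = (∫ x, lap d (fun y => (φp y + φn y) / 2) x
          * (starRingEnd ℂ) (φp x - φn x)).re := by
      have := integral_re hInt7; simpa using this
    have e2 : ∫ x, (gradInner d (fun y => (φp y + φn y) / 2)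
        (fun y => φp y - φn y) x).re
        = (∫ x, gradInner d (fun y => (φp y + φn y) / 2)
          (fun y => φp y - φn y) x).re := by
      have := integral_re hInt8; simpa using this
    have e3 : ∫ x, (lap d (fun y => (φp y + φn y) / 2) x
        * (starRingEnd ℂ) (φp x - φn x)).re = β * (A - B) := by
      have : (fun x => (lap d (fun y => (φp y + φn y) / 2) x
          * (starRingEnd ℂ) (φp x - φn x)).re)
          = fun x => β * (γp x ^ σ * ‖φp x‖ ^ 2) - β * (γp x ^ σ * ‖φn x‖ ^ 2) := by
        funext x; rw [hlapre x]; ring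
      have hj1 : Integrable (fun x => β * (γp x ^ σ * ‖φp x‖ ^ 2)) := hInt3.const_mul _
      have hj2 : Integrable (fun x => β * (γp x ^ σ * ‖φn x‖ ^ 2)) := hIntB.const_mul _
      rw [this, integral_sub hj1 hj2,
        integral_const_mul, integral_const_mul, hA, hB]
      ring
    have e4 : ∫ x, (gradInner d (fun y => (φp y + φn y) / 2)
        (fun y => φp y - φn y) x).re = (R1 - R2) / 2 := by
      have : (fun x => (gradInner d (fun y => (φp y + φn y) / 2)
          (fun y => φp y - φn y) x).re)
          = fun x => (gradsq d φp x - gradsq d φn x) / 2 := by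
        funext x; exact hgradre x
      rw [this, integral_div, integral_sub hInt1 hInt2, hR1, hR2]
    have : β * (A - B) = -((R1 - R2) / 2) := by
      rw [← e3, e1, hIBP]
      simp only [Complex.neg_re]
      rw [← e2, e4]
    linarith
  -- rewrite both sides of the goal
  have hLHS : (∫ x, ((1 / 4) * gradsq d φp x + (β / 2) * γp x ^ σ * ‖φp x‖ ^ 2
      - β * σ / (2 * (σ + 1)) * γp x ^ (σ + 1)))
      = 1 / 4 * R1 + β / 2 * A - β * σ / (2 * (σ + 1)) * Dp := by
    have hfun : (fun x => (1 / 4) * gradsq d φp x + (β / 2) * γp x ^ σ * ‖φp x‖ ^ 2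
        - β * σ / (2 * (σ + 1)) * γp x ^ (σ + 1))
        = fun x => ((1 / 4) * gradsq d φp x + (β / 2) * (γp x ^ σ * ‖φp x‖ ^ 2))
          - (β * σ / (2 * ((σ : ℝ) + 1))) * γp x ^ (σ + 1) := by
      funext x; push_cast; ring
    have hi1 : Integrable (fun x => (1 / 4) * gradsq d φp x) := hInt1.const_mul _
    have hi2 : Integrable (fun x => (β / 2) * (γp x ^ σ * ‖φp x‖ ^ 2)) := hInt3.const_mul _
    have hi3 : Integrable (fun x => (1 / 4) * gradsq d φp x
        + (β / 2) * (γp x ^ σ * ‖φp x‖ ^ 2)) := hi1.add hi2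
    have hi4 : Integrable (fun x =>
        (β * σ / (2 * ((σ : ℝ) + 1))) * γp x ^ (σ + 1)) := hInt5.const_mul _
    rw [hfun, integral_sub hi3 hi4, integral_add hi1 hi2,
      integral_const_mul, integral_const_mul, integral_const_mul, hR1, hA, hDp]
  have hRHS : (∫ x, ((1 / 4) * gradsq d φn x + (β / 2) * γm x ^ σ * ‖φn x‖ ^ 2
      - β * σ / (2 * (σ + 1)) * γm x ^ (σ + 1)))
      = 1 / 4 * R2 + β / 2 * C - β * σ / (2 * (σ + 1)) * Dm := by
    have hfun : (fun x => (1 / 4) * gradsq d φn x + (β / 2) * γm x ^ σ * ‖φn x‖ ^ 2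
        - β * σ / (2 * (σ + 1)) * γm x ^ (σ + 1))
        = fun x => ((1 / 4) * gradsq d φn x + (β / 2) * (γm x ^ σ * ‖φn x‖ ^ 2))
          - (β * σ / (2 * ((σ : ℝ) + 1))) * γm x ^ (σ + 1) := by
      funext x; push_cast; ring
    have hi1 : Integrable (fun x => (1 / 4) * gradsq d φn x) := hInt2.const_mul _
    have hi2 : Integrable (fun x => (β / 2) * (γm x ^ σ * ‖φn x‖ ^ 2)) := hInt4.const_mul _
    have hi3 : Integrable (fun x => (1 / 4) * gradsq d φn x
        + (β / 2) * (γm x ^ σ * ‖φn x‖ ^ 2)) := hi1.add hi2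
    have hi4 : Integrable (fun x =>
        (β * σ / (2 * ((σ : ℝ) + 1))) * γm x ^ (σ + 1)) := hInt6.const_mul _
    rw [hfun, integral_sub hi3 hi4, integral_add hi1 hi2,
      integral_const_mul, integral_const_mul, integral_const_mul, hR2, hC, hDm]
  rw [hLHS, hRHS]
  have hconst : β * (σ : ℝ) / (2 * ((σ : ℝ) + 1)) = β / 2 * ((σ : ℝ) / ((σ : ℝ) + 1)) := by
    field_simp
  rw [hconst]
  linear_combination (1 / 2) * key + (β / 2) * hBeq
end
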